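/- For n - k ≥ r ≥ 1, the q-generalized (r,s)-Stirling number of the second kind satisfies S_{r,s}(n, n-k) = ∑_{r ≤ i₁ ≤ i₂ ≤ … ≤ i_k ≤ n-k} ([i₁]_q[i₂]_q⋯[i_k]_q)^s. -/
import Mathlib


open Finset

/-- The `q`-number `[i]_q = (q^i - 1)/(q - 1)`. -/
noncomputable def qnum (q : ℂ) (i : ℕ) : ℂ := (q ^ i - 1) / (q - 1)

/-- The `q`-generalized `(r,s)`-Stirling numbers of the second kind `S_{r,s}(n,k)`,
characterized by the recurrence
`S_{r,s}(n,k) = S_{r,s}(n-1,k-1) + ([k]_q)^s S_{r,s}(n-1,k)` for `n > r`,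
with base `S_{r,s}(r,k) = δ_{k,r}`, and `S_{r,s}(n,k) = 0` for `n < r`
(so in particular `S_{r,s}(n,k) = 0` whenever `k ≤ r - 1` and `n ≥ 1`). -/
noncomputable def qStirlingSecondRS (q : ℂ) (r s : ℕ) : ℕ → ℕ → ℂ
  | 0, 0 => if r = 0 then 1 else 0
  | 0, _ + 1 => 0
  | n + 1, k =>
      if n + 1 < r then 0
      else if n + 1 = r then (if k = r then 1 else 0)
      else
        match k with
        | 0 => 0
        | k + 1 =>
            qStirlingSecondRS q r s n k
              + (qnum q (k + 1)) ^ s * qStirlingSecondRS q r s n (k + 1)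

variable (q : ℂ) (r s : ℕ)

lemma Srec {n : ℕ} (hn : r ≤ n) (j : ℕ) :
    qStirlingSecondRS q r s (n+1) (j+1)
      = qStirlingSecondRS q r s n j + (qnum q (j+1)) ^ s * qStirlingSecondRS q r s n (j+1) := by
  rw [qStirlingSecondRS]
  rw [if_neg (by omega), if_neg (by omega)]

lemma Slt (hr : 1 ≤ r) : ∀ n j, j < r → qStirlingSecondRS q r s n j = 0 := by
  intro n
  induction n with
  | zero =>
    intro j hj
    match j with
    | 0 => rw [qStirlingSecondRS]; rw [if_neg (by omega)]
    | j + 1 => rw [qStirlingSecondRS]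
  | succ m ih =>
    intro j hj
    rcases lt_trichotomy (m+1) r with h | h | h
    · rw [qStirlingSecondRS.eq_def]; simp only []; rw [if_pos h]
    · rw [qStirlingSecondRS.eq_def]; simp only []
      rw [if_neg (by omega), if_pos h, if_neg (by omega)]
    · match j with
      | 0 => rw [qStirlingSecondRS, if_neg (by omega), if_neg (by omega)]
      | j + 1 =>
        rw [Srec q r s (by omega), ih j (by omega), ih (j+1) hj]
        ring

lemma Sgt : ∀ n j, n < j → qStirlingSecondRS q r s n j = 0 := by
  intro n
  induction n with
  | zero =>
    intro j hj
    match j with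
    | j + 1 => rw [qStirlingSecondRS]
  | succ m ih =>
    intro j hj
    rcases lt_trichotomy (m+1) r with h | h | h
    · rw [qStirlingSecondRS.eq_def]; simp only []; rw [if_pos h]
    · rw [qStirlingSecondRS.eq_def]; simp only []
      rw [if_neg (by omega), if_pos h, if_neg (by omega)]
    · match j with
      | j + 1 =>
        rw [Srec q r s (by omega), ih j (by omega), ih (j+1) (by omega)]
        ring

lemma Sdiag : ∀ n, r ≤ n → qStirlingSecondRS q r s n n = 1 := by
  intro n
  induction n with
  | zero => intro h; rw [qStirlingSecondRS, if_pos (by omega)]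
  | succ m ih =>
    intro h
    rcases eq_or_lt_of_le h with h' | h'
    · rw [qStirlingSecondRS, if_neg (by omega), if_pos h'.symm, if_pos h'.symm]
    · rw [Srec q r s (by omega), ih (by omega), Sgt q r s m (m+1) (by omega)]
      ring

noncomputable def Tsum (n k : ℕ) : ℂ :=
  ∑ f ∈ Finset.univ.filter
      (fun f : Fin k → Fin n =>
        (∀ j, r ≤ (f j : ℕ) ∧ (f j : ℕ) ≤ n - k) ∧ ∀ j l, j ≤ l → f j ≤ f l),
    (∏ j, qnum q (f j : ℕ)) ^ s

lemma Tbase (n : ℕ) : Tsum q r s n 0 = 1 := by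
  rw [Tsum]
  rw [Finset.filter_true_of_mem (fun f _ => ⟨fun j => j.elim0, fun j => j.elim0⟩)]
  simp

lemma Tempty (n k : ℕ) (hk : 1 ≤ k) (h : n - k < r) : Tsum q r s n k = 0 := by
  rw [Tsum]
  convert Finset.sum_empty
  rw [Finset.filter_eq_empty_iff]
  rintro f - ⟨h1, -⟩
  have := h1 ⟨0, by omega⟩
  omega

def snocMax (n k : ℕ) (g : Fin k → Fin n) : Fin (k+1) → Fin (n+1) :=
  Fin.snoc (fun j => Fin.castLE (Nat.le_succ n) (g j))
    ⟨n - k, Nat.lt_succ_of_le (Nat.sub_le n k)⟩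

lemma snocMax_castSucc (n k : ℕ) (g : Fin k → Fin n) (j : Fin k) :
    snocMax n k g (Fin.castSucc j) = Fin.castLE (Nat.le_succ n) (g j) := by
  simp [snocMax]

lemma snocMax_last (n k : ℕ) (g : Fin k → Fin n) :
    snocMax n k g (Fin.last k) = ⟨n - k, Nat.lt_succ_of_le (Nat.sub_le n k)⟩ := by
  simp [snocMax]

lemma Trec (hr : 1 ≤ r) (n k : ℕ) (h : r + k ≤ n) :
    Tsum q r s (n+1) (k+1)
      = Tsum q r s n (k+1) + qnum q (n - k) ^ s * Tsum q r s n k := by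
  classical
  set p : (Fin (k+1) → Fin (n+1)) → Prop := fun f => (f (Fin.last k) : ℕ) = n - k with hp
  set s0 : Finset (Fin (k+1) → Fin (n+1)) := Finset.univ.filter
      (fun f : Fin (k+1) → Fin (n+1) =>
        (∀ j, r ≤ (f j : ℕ) ∧ (f j : ℕ) ≤ n + 1 - (k + 1)) ∧ ∀ j l, j ≤ l → f j ≤ f l)
    with hs0
  have h2 : ∑ f ∈ s0.filter (fun f => ¬ p f), (∏ j, qnum q (f j : ℕ)) ^ s
      = Tsum q r s n (k+1) := by
    rw [Tsum]
    refine Finset.sum_bij' (fun f hf => fun j => (⟨(f j : ℕ), ?_⟩ : Fin n))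
      (fun g hg => fun j => Fin.castLE (Nat.le_succ n) (g j)) ?_ ?_ ?_ ?_ ?_
    · -- f j < n
      obtain ⟨hfC, hne⟩ := Finset.mem_filter.mp hf
      obtain ⟨-, hbd, hmono⟩ := Finset.mem_filter.mp hfC
      have h1 := (hbd j).1
      have h2 := (hbd (Fin.last k)).1
      have h3 := (hbd (Fin.last k)).2
      have h4 : (f j : ℕ) ≤ (f (Fin.last k) : ℕ) := hmono j (Fin.last k) (Fin.le_last j)
      simp only [hp] at hne
      omega
    · -- membership in target
      intro f hf
      obtain ⟨hfC, hne⟩ := Finset.mem_filter.mp hf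
      obtain ⟨-, hbd, hmono⟩ := Finset.mem_filter.mp hfC
      simp only [Finset.mem_filter, Finset.mem_univ, true_and]
      constructor
      · intro j
        have h1 := (hbd j).1
        have h2 := (hbd (Fin.last k)).1
        have h3 := (hbd (Fin.last k)).2
        have h4 : (f j : ℕ) ≤ (f (Fin.last k) : ℕ) := hmono j (Fin.last k) (Fin.le_last j)
        simp only [hp] at hne
        constructor <;> omega
      · intro j l hjl
        exact hmono j l hjl
    · -- membership back
      intro g hg
      obtain ⟨-, hbd, hmono⟩ := Finset.mem_filter.mp hg
      simp only [Finset.mem_filter, Finset.mem_univ, true_and, hs0, hp]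
      refine ⟨⟨fun j => ?_, fun j l hjl => hmono j l hjl⟩, ?_⟩
      · have h1 := (hbd j).1
        have h2 := (hbd j).2
        simp only [Fin.coe_castLE]
        constructor <;> omega
      · have h1 := (hbd (Fin.last k)).1
        have h2 := (hbd (Fin.last k)).2
        simp only [Fin.coe_castLE]
        omega
    · intro f hf; funext j; exact Fin.ext rfl
    · intro g hg; funext j; exact Fin.ext rfl
    · intro f hf; rfl
  have h1 : ∑ f ∈ s0.filter p, (∏ j, qnum q (f j : ℕ)) ^ s
      = qnum q (n - k) ^ s * Tsum q r s n k := by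
    have step : ∀ f ∈ s0.filter p, (∏ j, qnum q (f j : ℕ)) ^ s
        = qnum q (n - k) ^ s * (∏ j : Fin k, qnum q ((f (Fin.castSucc j) : ℕ))) ^ s := by
      intro f hf
      obtain ⟨-, hlast⟩ := Finset.mem_filter.mp hf
      rw [Fin.prod_univ_castSucc]
      simp only [hp] at hlast
      rw [hlast, mul_pow, mul_comm]
    rw [Finset.sum_congr rfl step, ← Finset.mul_sum]
    congr 1
    rw [Tsum]
    refine Finset.sum_bij'
      (fun f hf => fun j => (⟨(f (Fin.castSucc j) : ℕ), ?_⟩ : Fin n))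
      (fun g hg => snocMax n k g)
      ?_ ?_ ?_ ?_ ?_
    · -- f (castSucc j) < n
      obtain ⟨hfC, hlast⟩ := Finset.mem_filter.mp hf
      obtain ⟨-, hbd, hmono⟩ := Finset.mem_filter.mp hfC
      simp only [hp] at hlast
      have h4 : (f (Fin.castSucc j) : ℕ) ≤ (f (Fin.last k) : ℕ) :=
        hmono _ _ (Fin.le_last _)
      have hk1 : (j : ℕ) < k := j.isLt
      omega
    · -- membership in Tsum n k filter
      intro f hf
      obtain ⟨hfC, hlast⟩ := Finset.mem_filter.mp hf
      obtain ⟨-, hbd, hmono⟩ := Finset.mem_filter.mp hfC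
      simp only [hp] at hlast
      simp only [Finset.mem_filter, Finset.mem_univ, true_and]
      constructor
      · intro j
        have h1 := (hbd (Fin.castSucc j)).1
        have h4 : (f (Fin.castSucc j) : ℕ) ≤ (f (Fin.last k) : ℕ) :=
          hmono _ _ (Fin.le_last _)
        exact ⟨h1, by omega⟩
      · intro j l hjl
        exact hmono _ _ (by simpa using hjl)
    · -- snocMax g ∈ s0.filter p
      intro g hg
      obtain ⟨-, hbd, hmono⟩ := Finset.mem_filter.mp hg
      have hbound : ∀ x : Fin (k+1),
          r ≤ (snocMax n k g x : ℕ) ∧ (snocMax n k g x : ℕ) ≤ n - k := by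
        intro x
        by_cases hx : (x : ℕ) < k
        · have hxe : x = Fin.castSucc (⟨(x : ℕ), hx⟩ : Fin k) := Fin.ext rfl
          rw [hxe, snocMax_castSucc]
          have h1 := (hbd ⟨(x : ℕ), hx⟩).1
          have h2 := (hbd ⟨(x : ℕ), hx⟩).2
          simp only [Fin.coe_castLE]
          exact ⟨h1, by omega⟩
        · have hxe : x = Fin.last k := Fin.ext (by simp only [Fin.val_last]; omega)
          rw [hxe, snocMax_last]
          show r ≤ n - k ∧ n - k ≤ n - k
          omega
      simp only [Finset.mem_filter, Finset.mem_univ, true_and, hs0, hp]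
      refine ⟨⟨fun x => ?_, fun x l hxl => ?_⟩, ?_⟩
      · have hb := hbound x
        exact ⟨hb.1, by omega⟩
      · -- monotone
        by_cases hl : (l : ℕ) < k
        · have hx : (x : ℕ) < k := lt_of_le_of_lt hxl hl
          have hxe : x = Fin.castSucc (⟨(x : ℕ), hx⟩ : Fin k) := Fin.ext rfl
          have hle : l = Fin.castSucc (⟨(l : ℕ), hl⟩ : Fin k) := Fin.ext rfl
          rw [hxe, hle, snocMax_castSucc, snocMax_castSucc]
          have hm := hmono (⟨(x : ℕ), hx⟩ : Fin k) (⟨(l : ℕ), hl⟩ : Fin k) hxl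
          exact hm
        · have hle : l = Fin.last k := Fin.ext (by simp only [Fin.val_last]; omega)
          rw [hle, snocMax_last]
          have hb := (hbound x).2
          show (snocMax n k g x : ℕ) ≤ n - k
          exact hb
      · rw [snocMax_last]
    · -- left inverse
      intro f hf
      obtain ⟨hfC, hlast⟩ := Finset.mem_filter.mp hf
      simp only [hp] at hlast
      funext x
      beta_reduce
      by_cases hx : (x : ℕ) < k
      · have hxe : x = Fin.castSucc (⟨(x : ℕ), hx⟩ : Fin k) := Fin.ext rfl
        rw [hxe, snocMax_castSucc]
        exact Fin.ext rfl
      · have hxe : x = Fin.last k := Fin.ext (by simp only [Fin.val_last]; omega)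
        rw [hxe, snocMax_last]
        exact Fin.ext hlast.symm
    · -- right inverse
      intro g hg
      funext x
      beta_reduce
      refine Fin.ext ?_
      show ((snocMax n k g) (Fin.castSucc x) : ℕ) = (g x : ℕ)
      rw [snocMax_castSucc]
      rfl
    · intro f hf; rfl
  have hsplit := Finset.sum_filter_add_sum_filter_not s0 p
      (fun f => (∏ j, qnum q (f j : ℕ)) ^ s)
  have hT : Tsum q r s (n+1) (k+1) = ∑ f ∈ s0, (∏ j, qnum q (f j : ℕ)) ^ s := rfl
  rw [hT, ← hsplit, h1, h2]
  ring

theorem stmt18 (q : ℂ) (r s n k : ℕ) (hr : 1 ≤ r) (hs : 1 ≤ s) (hnk : r + k ≤ n) :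
    qStirlingSecondRS q r s n (n - k)
      = ∑ f ∈ Finset.univ.filter
          (fun f : Fin k → Fin n =>
            (∀ j, r ≤ (f j : ℕ) ∧ (f j : ℕ) ≤ n - k) ∧ ∀ j l, j ≤ l → f j ≤ f l),
        (∏ j, qnum q (f j : ℕ)) ^ s := by
  have key : ∀ n k : ℕ, r + k ≤ n → qStirlingSecondRS q r s n (n - k) = Tsum q r s n k := by
    intro n
    induction n with
    | zero => intro k hk; omega
    | succ m ih =>
      intro k hk
      match k with
      | 0 =>
        rw [Nat.sub_zero, Sdiag q r s (m+1) (by omega), Tbase]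
      | k + 1 =>
        rw [show m + 1 - (k+1) = (m - (k+1)) + 1 from by omega,
          Srec q r s (show r ≤ m by omega),
          show m - (k+1) + 1 = m - k from by omega]
        rcases Nat.lt_or_ge m (r + (k+1)) with hc | hc
        · rw [Slt q r s hr m (m - (k+1)) (by omega), ih k (by omega),
            Trec q r s hr m k (by omega), Tempty q r s m (k+1) (by omega) (by omega)]
        · rw [ih (k+1) hc, ih k (by omega), Trec q r s hr m k (by omega)]
  exact key n k hnk
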